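/- Let R be a Hilbert domain of finite character that is not a field. Then R has Krull dimension one. -/

import Mathlib

/-- The height of an ideal `I`: the infimum of the heights (in the prime spectrum)
of the prime ideals containing `I`. -/
noncomputable def idealHeight (R : Type*) [CommRing R] (I : Ideal R) : ℕ∞ :=
  ⨅ P : {P : PrimeSpectrum R // I ≤ P.asIdeal}, Order.height P.1

/-- An ideal `I` is radically perfect if its height equals the least number `n` such that
`√I` is the radical of an ideal generated by `n` elements, and moreover, if `ht I = 0`,
then `√I` is the radical of a principal ideal generated by a zero divisor. -/
def RadicallyPerfect {R : Type*} [CommRing R] (I : Ideal R) : Prop :=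
  idealHeight R I = sInf {n : ℕ∞ | ∃ s : Finset R,
      (s.card : ℕ∞) = n ∧ (Ideal.span (s : Set R)).radical = I.radical} ∧
    (idealHeight R I = 0 → ∃ θ : R, θ ∉ nonZeroDivisors R ∧
      I.radical = (Ideal.span {θ} : Ideal R).radical)

/-- The set of ideals of `R` generated by `ht P` elements whose radical equals `P`. -/
def genHtRad {R : Type*} [CommRing R] (P : Ideal R) : Set (Ideal R) :=
  {A | ∃ s : Finset R, (s.card : ℕ∞) = idealHeight R P ∧
    Ideal.span (s : Set R) = A ∧ A.radical = P}

/-- A commutative ring `R` is radically finite if every prime ideal `P` of `R` is radically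
perfect, the set of ideals generated by `ht P` elements with radical `P` has a maximal
member `A`, and every chain of ideals between `A` and `P` is finite. -/
def RadicallyFinite (R : Type*) [CommRing R] : Prop :=
  ∀ P : Ideal R, P.IsPrime → RadicallyPerfect P ∧
    ∃ A ∈ genHtRad P, (∀ B ∈ genHtRad P, A ≤ B → B = A) ∧
      ∀ C : Set (Ideal R), IsChain (· ≤ ·) C → C ⊆ Set.Icc A P → C.Finite

/-- A ring is of finite character if each nonzero element lies in only finitely many
maximal ideals. -/
def FiniteCharacter (R : Type*) [CommRing R] : Prop :=
  ∀ x : R, x ≠ 0 → {M : Ideal R | M.IsMaximal ∧ x ∈ M}.Finite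

/-- A Hilbert (Jacobson) domain of finite character that is not a field has
Krull dimension one. -/
theorem hilbert_finiteCharacter_krullDim_one {R : Type*} [CommRing R] [IsDomain R]
    [IsJacobsonRing R] (hfc : FiniteCharacter R) (hnf : ¬ IsField R) :
    ringKrullDim R = 1 := by
  -- Key: every nonzero prime is maximal.
  have key : ∀ P : Ideal R, P.IsPrime → P ≠ ⊥ → P.IsMaximal := by
    intro P hP hPbot
    obtain ⟨x, hxP, hx0⟩ := Submodule.exists_mem_ne_zero_of_ne_bot hPbot
    have hfin : {M : Ideal R | P ≤ M ∧ M.IsMaximal}.Finite :=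
      (hfc x hx0).subset fun M ⟨h1, h2⟩ => ⟨h2, h1 hxP⟩
    have hjac : P.jacobson = P := IsJacobsonRing.out' P hP.isRadical
    have hsinf : sInf {M : Ideal R | P ≤ M ∧ M.IsMaximal} ≤ P := hjac.le
    rw [← hfin.coe_toFinset, ← Finset.inf_id_eq_sInf, hP.inf_le'] at hsinf
    obtain ⟨M, hM, hMP⟩ := hsinf
    rw [hfin.mem_toFinset] at hM
    have hPM : P = M := le_antisymm hM.1 hMP
    exact hPM ▸ hM.2
  refine le_antisymm ?_ ?_
  · -- upper bound: every chain has length ≤ 1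
    refine iSup_le fun p => ?_
    by_contra h
    push_neg at h
    have hlen : 2 ≤ p.length := by
      by_contra hl
      push_neg at hl
      interval_cases hh : p.length <;> simp_all <;> exact h.not_ge (by norm_num)
    have h01 : p.toFun ⟨0, by omega⟩ < p.toFun ⟨1, by omega⟩ := by
      apply p.strictMono; simp [Fin.lt_def]
    have h12 : p.toFun ⟨1, by omega⟩ < p.toFun ⟨2, by omega⟩ := by
      apply p.strictMono; simp [Fin.lt_def]
    set P1 := p.toFun ⟨1, by omega⟩
    set P2 := p.toFun ⟨2, by omega⟩
    have h1bot : P1.asIdeal ≠ ⊥ := by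
      intro hb
      exact absurd (hb ▸ bot_le : P1.asIdeal ≤ (p.toFun ⟨0, by omega⟩).asIdeal)
        (not_le_of_gt h01)
    have h1max : P1.asIdeal.IsMaximal := key _ P1.2 h1bot
    exact absurd (h1max.eq_of_le P2.2.ne_top (le_of_lt h12))
      (fun he => (ne_of_lt h12) (PrimeSpectrum.ext he))
  · -- lower bound: exhibit a chain of length 1
    haveI : Nontrivial R := inferInstance
    obtain ⟨I, hIbot, hItop⟩ := Ring.not_isField_iff_exists_ideal_bot_lt_and_lt_top.mp hnf
    obtain ⟨M, hM, hIM⟩ := Ideal.exists_le_maximal I (ne_of_lt hItop)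
    have hMbot : (⊥ : Ideal R) < M := lt_of_lt_of_le hIbot hIM
    let q : LTSeries (PrimeSpectrum R) :=
      ⟨1, ![⟨⊥, Ideal.bot_prime⟩, ⟨M, hM.isPrime⟩], by
        intro i
        fin_cases i
        show (⟨⊥, Ideal.bot_prime⟩ : PrimeSpectrum R) < ⟨M, hM.isPrime⟩
        exact hMbot⟩
    have := Order.LTSeries.length_le_krullDim q
    exact this
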